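/- arXiv:2104.09618 — 3 statements merged into one kernel-verified Lean document; each statement's English description precedes it below -/
import Mathlib

section
/- Let H be a symmetric positive semi-definite d×d real matrix whose largest eigenvalue λ₁ > 0 is simple, and let q ∈ ℝ^d be a unit eigenvector with Hq = λ₁q. Let v : [0,∞) → ℝ^d be differentiable with ‖v(t)‖ = 1 for all t ≥ 0 and satisfy the Oja PCA flow v̇(t) = (I − v(t)v(t)ᵀ)Hv(t). If 0 < ⟨q, v(0)⟩ ≤ 1, then v(t) → q as t → ∞. -/
open Matrix Filter
open scoped InnerProductSpace

/-- Right-hand side of the Oja PCA flow `v̇ = (I - v vᵀ) M v` on `ℝ^d`. -/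
noncomputable def ojaRHS {d : ℕ} (M : Matrix (Fin d) (Fin d) ℝ)
    (x : EuclideanSpace ℝ (Fin d)) : EuclideanSpace ℝ (Fin d) :=
  WithLp.toLp 2 (((1 - Matrix.vecMulVec x x) * M) *ᵥ x)

variable {d : ℕ}

/-- `M *ᵥ x` as an element of `EuclideanSpace`. -/
def mv (M : Matrix (Fin d) (Fin d) ℝ) (x : EuclideanSpace ℝ (Fin d)) :
    EuclideanSpace ℝ (Fin d) := WithLp.toLp 2 (M *ᵥ x)

lemma inner_eq_dot (x y : EuclideanSpace ℝ (Fin d)) : ⟪x, y⟫_ℝ = ∑ i, x i * y i := by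
  simp [PiLp.inner_apply, RCLike.inner_apply]
  exact Finset.sum_congr rfl fun i _ => mul_comm _ _

lemma ojaRHS_eq (M : Matrix (Fin d) (Fin d) ℝ) (x : EuclideanSpace ℝ (Fin d)) :
    ojaRHS M x = mv M x - (⟪x, mv M x⟫_ℝ) • x := by
  have h1 : ojaRHS M x = (fun i => (M *ᵥ x) i - (Matrix.vecMulVec x x *ᵥ (M *ᵥ x)) i) := by
    funext i
    show (((1 - Matrix.vecMulVec x x) * M) *ᵥ x) i = _
    rw [Matrix.sub_mul, Matrix.one_mul, Matrix.sub_mulVec, ← Matrix.mulVec_mulVec]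
    rfl
  ext i
  rw [h1]
  simp only [PiLp.sub_apply, PiLp.smul_apply, inner_eq_dot, smul_eq_mul,
    Matrix.mulVec, Matrix.vecMulVec_apply, dotProduct]
  rw [Finset.sum_mul]
  congr 1
  · apply Finset.sum_congr rfl
    intro j _
    simp only [mv, Matrix.mulVec, dotProduct]
    ring

lemma mat_inner_symm {H : Matrix (Fin d) (Fin d) ℝ} (hH : H.IsHermitian)
    (x y : EuclideanSpace ℝ (Fin d)) :
    ⟪mv H x, y⟫_ℝ = ⟪x, mv H y⟫_ℝ := by
  simp only [inner_eq_dot, mv, Matrix.mulVec, dotProduct, Finset.sum_mul, Finset.mul_sum]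
  rw [Finset.sum_comm]
  apply Finset.sum_congr rfl
  intro j _
  apply Finset.sum_congr rfl
  intro i _
  have : H j i = H i j := by
    conv_lhs => rw [← hH]
    rfl
  rw [this]; ring

lemma mv_add (M : Matrix (Fin d) (Fin d) ℝ) (x y : EuclideanSpace ℝ (Fin d)) :
    mv M (x + y) = mv M x + mv M y := by
  ext i
  simp [mv, Matrix.mulVec, dotProduct, PiLp.add_apply, mul_add, Finset.sum_add_distrib]

lemma mv_smul (M : Matrix (Fin d) (Fin d) ℝ) (c : ℝ) (x : EuclideanSpace ℝ (Fin d)) :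
    mv M (c • x) = c • mv M x := by
  ext i
  simp [mv, Matrix.mulVec, dotProduct, PiLp.smul_apply, Finset.mul_sum]
  apply Finset.sum_congr rfl
  intro j _
  ring

lemma gap_exists {H : Matrix (Fin d) (Fin d) ℝ} (hH : H.IsHermitian) {lam1 : ℝ}
    (hlam1 : 0 < lam1) {q : EuclideanSpace ℝ (Fin d)} (hq : ‖q‖ = 1)
    (hmax : ∀ (μ : ℝ) (w : EuclideanSpace ℝ (Fin d)), w ≠ 0 → mv H w = μ • w → μ ≤ lam1)
    (hsimple : ∀ w : EuclideanSpace ℝ (Fin d), mv H w = lam1 • w → ∃ c : ℝ, w = c • q) :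
    ∃ lam2 : ℝ, 0 ≤ lam2 ∧ lam2 < lam1 ∧
      ∀ w : EuclideanSpace ℝ (Fin d), ⟪q, w⟫_ℝ = 0 → ⟪w, mv H w⟫_ℝ ≤ lam2 * ‖w‖ ^ 2 := by
  set b := hH.eigenvectorBasis with hb
  set μ := hH.eigenvalues with hμ
  have hbnorm : ∀ i, ‖b i‖ = 1 := fun i => b.orthonormal.1 i
  have hbne : ∀ i, b i ≠ 0 := by
    intro i h
    have := hbnorm i
    rw [h, norm_zero] at this
    exact one_ne_zero this.symm
  have heigb : ∀ i, mv H (b i) = μ i • b i := by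
    intro i
    ext k
    exact congrFun (hH.mulVec_eigenvectorBasis i) k
  have hμle : ∀ i, μ i ≤ lam1 := fun i => hmax (μ i) (b i) (hbne i) (heigb i)
  set T : Finset (Fin d) := Finset.univ.filter (fun i => μ i ≠ lam1) with hT
  -- vanishing of coefficients outside T
  have hvanish : ∀ w : EuclideanSpace ℝ (Fin d), ⟪q, w⟫_ℝ = 0 → ∀ i ∉ T, ⟪w, b i⟫_ℝ = 0 := by
    intro w hw i hi
    have hieq : μ i = lam1 := by
      by_contra h
      exact hi (Finset.mem_filter.2 ⟨Finset.mem_univ i, h⟩)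
    obtain ⟨c, hc⟩ := hsimple (b i) (by rw [heigb i, hieq])
    rw [real_inner_comm, hc, inner_smul_left]
    simp [hw]
  -- generic bound given a lam2
  have key : ∀ lam2 : ℝ, 0 ≤ lam2 → (∀ i ∈ T, μ i ≤ lam2) →
      ∀ w : EuclideanSpace ℝ (Fin d), ⟪q, w⟫_ℝ = 0 → ⟪w, mv H w⟫_ℝ ≤ lam2 * ‖w‖ ^ 2 := by
    intro lam2 hl0 hlT w hw
    have hexp : ⟪w, mv H w⟫_ℝ = ∑ i, μ i * ⟪w, b i⟫_ℝ ^ 2 := by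
      rw [← b.sum_inner_mul_inner w (mv H w)]
      apply Finset.sum_congr rfl
      intro i _
      have h3 : ⟪b i, mv H w⟫_ℝ = μ i * ⟪b i, w⟫_ℝ := by
        rw [← mat_inner_symm hH, heigb i, inner_smul_left]
        simp
      rw [h3, real_inner_comm w (b i)]; ring
    have hns : ‖w‖ ^ 2 = ∑ i, ⟪w, b i⟫_ℝ ^ 2 := by
      rw [← real_inner_self_eq_norm_sq, ← b.sum_inner_mul_inner w w]
      apply Finset.sum_congr rfl
      intro i _
      rw [real_inner_comm w (b i)]; ring
    have hsum1 : ∑ i, μ i * ⟪w, b i⟫_ℝ ^ 2 = ∑ i ∈ T, μ i * ⟪w, b i⟫_ℝ ^ 2 := by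
      symm
      apply Finset.sum_subset (Finset.subset_univ T)
      intro i _ hi
      rw [hvanish w hw i hi]; ring
    have hsum2 : ∑ i, ⟪w, b i⟫_ℝ ^ 2 = ∑ i ∈ T, ⟪w, b i⟫_ℝ ^ 2 := by
      symm
      apply Finset.sum_subset (Finset.subset_univ T)
      intro i _ hi
      rw [hvanish w hw i hi]; ring
    rw [hexp, hns, hsum1, hsum2, Finset.mul_sum]
    apply Finset.sum_le_sum
    intro i hi
    have := hlT i hi
    nlinarith [sq_nonneg (⟪w, b i⟫_ℝ)]
  rcases T.eq_empty_or_nonempty with hTe | hTne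
  · exact ⟨0, le_refl 0, hlam1, key 0 (le_refl 0) (by rw [hTe]; simp)⟩
  · refine ⟨max 0 (T.sup' hTne μ), le_max_left _ _, ?_, ?_⟩
    · apply max_lt hlam1
      rw [Finset.sup'_lt_iff]
      intro i hi
      exact lt_of_le_of_ne (hμle i) (Finset.mem_filter.1 hi).2
    · apply key _ (le_max_left _ _)
      intro i hi
      exact le_trans (Finset.le_sup' μ hi) (le_max_right _ _)

lemma gap_est {H : Matrix (Fin d) (Fin d) ℝ} (hH : H.IsHermitian) {lam1 lam2 : ℝ}
    {q : EuclideanSpace ℝ (Fin d)} (hq : ‖q‖ = 1) (heig : mv H q = lam1 • q)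
    (hbound : ∀ w : EuclideanSpace ℝ (Fin d), ⟪q, w⟫_ℝ = 0 → ⟪w, mv H w⟫_ℝ ≤ lam2 * ‖w‖ ^ 2)
    (x : EuclideanSpace ℝ (Fin d)) (hx : ‖x‖ = 1) :
    (lam1 - lam2) * (1 - ⟪q, x⟫_ℝ ^ 2) ≤ lam1 - ⟪x, mv H x⟫_ℝ := by
  set a := ⟪q, x⟫_ℝ with ha
  have hqq : ⟪q, q⟫_ℝ = 1 := by
    rw [real_inner_self_eq_norm_sq, hq]; norm_num
  set w : EuclideanSpace ℝ (Fin d) := x - a • q with hw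
  have hqw : ⟪q, w⟫_ℝ = 0 := by
    rw [hw, inner_sub_right, real_inner_smul_right, hqq]
    ring
  have hx_eq : x = a • q + w := by rw [hw]; abel
  have hwn : ‖w‖ ^ 2 = 1 - a ^ 2 := by
    rw [hw, norm_sub_sq_real, hx, real_inner_smul_right, real_inner_comm q x, ← ha,
      norm_smul, hq]
    simp only [mul_one, Real.norm_eq_abs, sq_abs]
    ring
  have hHx : mv H x = (a * lam1) • q + mv H w := by
    rw [hx_eq, mv_add, mv_smul, heig, smul_smul]
  have hiq : ⟪q, mv H w⟫_ℝ = 0 := by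
    rw [← mat_inner_symm hH, heig, real_inner_smul_left, hqw, mul_zero]
  have hwq : ⟪w, q⟫_ℝ = 0 := by rw [real_inner_comm]; exact hqw
  have hexp : ⟪x, mv H x⟫_ℝ = a ^ 2 * lam1 + ⟪w, mv H w⟫_ℝ := by
    rw [hHx, hx_eq]
    simp only [inner_add_left, inner_add_right, real_inner_smul_left,
      real_inner_smul_right, hqq, hqw, hiq, hwq]
    ring
  have hwb := hbound w hqw
  have ha2 : a ^ 2 ≤ 1 := by
    have h := abs_real_inner_le_norm q x
    rw [hq, hx, mul_one] at h
    calc a ^ 2 = |a| ^ 2 := (sq_abs a).symm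
    _ ≤ 1 ^ 2 := by nlinarith [abs_nonneg a]
    _ = 1 := one_pow 2
  rw [hwn] at hwb
  nlinarith [hwb, hexp]


/-- If `H` is symmetric positive semi-definite with simple largest eigenvalue
`λ₁ > 0` and unit eigenvector `q`, any unit-norm solution of the Oja PCA flow
with `0 < ⟨q, v(0)⟩ ≤ 1` converges to `q`. -/
theorem stmt0 {d : ℕ} (H : Matrix (Fin d) (Fin d) ℝ) (hH : H.PosSemidef)
    (lam1 : ℝ) (hlam1 : 0 < lam1)
    (q : EuclideanSpace ℝ (Fin d)) (hq : ‖q‖ = 1)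
    (heig : H *ᵥ q = lam1 • q)
    (hmax : ∀ (μ : ℝ) (w : EuclideanSpace ℝ (Fin d)), w ≠ 0 → H *ᵥ w = μ • w → μ ≤ lam1)
    (hsimple : ∀ w : EuclideanSpace ℝ (Fin d), H *ᵥ w = lam1 • w → ∃ c : ℝ, w = c • q)
    (v : ℝ → EuclideanSpace ℝ (Fin d))
    (hnorm : ∀ t : ℝ, 0 ≤ t → ‖v t‖ = 1)
    (hode : ∀ t : ℝ, 0 ≤ t → HasDerivAt v (ojaRHS H (v t)) t)
    (h0pos : 0 < ⟪q, v 0⟫_ℝ) (h0le : ⟪q, v 0⟫_ℝ ≤ 1) :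
    Tendsto v atTop (nhds q) := by
  have heig' : mv H q = lam1 • q := by ext i; exact congrFun heig i
  have hmax' : ∀ (μ : ℝ) (w : EuclideanSpace ℝ (Fin d)), w ≠ 0 → mv H w = μ • w → μ ≤ lam1 :=
    fun μ w hw h => hmax μ w hw (congrArg WithLp.ofLp h)
  have hsimple' : ∀ w : EuclideanSpace ℝ (Fin d), mv H w = lam1 • w → ∃ c : ℝ, w = c • q :=
    fun w h => hsimple w (congrArg WithLp.ofLp h)
  obtain ⟨lam2, hl20, hl2lt, hl2⟩ := gap_exists hH.1 hlam1 hq hmax' hsimple'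
  set δ := lam1 - lam2 with hδdef
  have hδ : 0 < δ := by simp [hδdef]; linarith
  set a : ℝ → ℝ := fun t => ⟪q, v t⟫_ℝ with hadef
  set R : ℝ → ℝ := fun t => ⟪v t, mv H (v t)⟫_ℝ with hRdef
  -- |a t| ≤ 1
  have habs : ∀ t : ℝ, 0 ≤ t → |a t| ≤ 1 := by
    intro t ht
    have h := abs_real_inner_le_norm q (v t)
    rw [hq, hnorm t ht, mul_one] at h
    exact h
  have hale : ∀ t : ℝ, 0 ≤ t → a t ≤ 1 := fun t ht => (abs_le.1 (habs t ht)).2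
  -- gap estimate along the flow
  have hgap : ∀ t : ℝ, 0 ≤ t → δ * (1 - a t ^ 2) ≤ lam1 - R t := by
    intro t ht
    exact gap_est hH.1 hq heig' hl2 (v t) (hnorm t ht)
  have hgap0 : ∀ t : ℝ, 0 ≤ t → 0 ≤ lam1 - R t := by
    intro t ht
    have h1 := hgap t ht
    have h2 := habs t ht
    have h3 : a t ^ 2 ≤ 1 := by nlinarith [sq_abs (a t), abs_nonneg (a t)]
    nlinarith [mul_nonneg hδ.le (by linarith : (0:ℝ) ≤ 1 - a t ^ 2)]
  -- derivative of a
  have hA : ∀ t : ℝ, 0 ≤ t → HasDerivAt a ((lam1 - R t) * a t) t := by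
    intro t ht
    have h := HasDerivAt.inner ℝ (hasDerivAt_const t q) (hode t ht)
    have hval : ⟪q, ojaRHS H (v t)⟫_ℝ + ⟪(0 : EuclideanSpace ℝ (Fin d)), v t⟫_ℝ
        = (lam1 - R t) * a t := by
      rw [inner_zero_left, add_zero, ojaRHS_eq, inner_sub_right, real_inner_smul_right,
        ← mat_inner_symm hH.1 q (v t), heig', real_inner_smul_left]
      simp only [hadef, hRdef]
      ring
    rw [hval] at h
    exact h
  -- continuity of a on [0, ∞)
  have haC : ContinuousOn a (Set.Ici 0) := by
    intro t ht
    exact ((hA t ht).continuousAt).continuousWithinAt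
  -- a² is monotone on [0, ∞)
  have hsqmono : MonotoneOn (fun t => a t ^ 2) (Set.Ici 0) := by
    apply monotoneOn_of_deriv_nonneg (convex_Ici 0)
    · exact (continuous_pow 2).comp_continuousOn haC
    · intro t ht
      rw [interior_Ici] at ht
      exact ((hA t (le_of_lt ht)).pow 2).differentiableAt.differentiableWithinAt
    · intro t ht
      rw [interior_Ici] at ht
      have ht' := le_of_lt (Set.mem_Ioi.mp ht)
      rw [((hA t ht').fun_pow 2).deriv]
      norm_num
      nlinarith [mul_nonneg (hgap0 t ht') (sq_nonneg (a t)), sq_nonneg (a t)]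
  -- a stays ≥ a 0 > 0
  have ha0 : 0 < a 0 := h0pos
  have hapos : ∀ t : ℝ, 0 ≤ t → a 0 ≤ a t := by
    intro t ht
    have hsq : a 0 ^ 2 ≤ a t ^ 2 := hsqmono (Set.self_mem_Ici) ht ht
    have hne : ∀ s : ℝ, 0 ≤ s → a s ≠ 0 := by
      intro s hs h0
      have : a 0 ^ 2 ≤ a s ^ 2 := hsqmono (Set.self_mem_Ici) hs hs
      rw [h0] at this
      nlinarith
    have hpos : 0 < a t := by
      rcases lt_or_ge 0 (a t) with h | h
      · exact h
      · exfalso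
        have hC : ContinuousOn a (Set.Icc 0 t) :=
          haC.mono (fun s hs => hs.1)
        have : (0 : ℝ) ∈ Set.Icc (a t) (a 0) := ⟨h, le_of_lt ha0⟩
        obtain ⟨s, hs, hs0⟩ := intermediate_value_Icc' ht hC this
        exact hne s hs.1 hs0
    nlinarith
  -- exponential convergence of 1 - a
  set c := δ * a 0 with hcdef
  have hc : 0 < c := mul_pos hδ ha0
  set g : ℝ → ℝ := fun t => (1 - a t) * Real.exp (c * t) with hgdef
  have hG : ∀ t : ℝ, 0 ≤ t → HasDerivAt g
      ((0 - (lam1 - R t) * a t) * Real.exp (c * t) + (1 - a t) * (Real.exp (c * t) * c)) t := by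
    intro t ht
    have h1 : HasDerivAt (fun s : ℝ => c * s) c t := by
      simpa using (hasDerivAt_id t).const_mul c
    exact ((hasDerivAt_const t 1).sub (hA t ht)).mul h1.exp
  have hganti : AntitoneOn g (Set.Ici 0) := by
    apply antitoneOn_of_deriv_nonpos (convex_Ici 0)
    · exact (continuousOn_const.sub haC).mul (Real.continuous_exp.comp (continuous_const.mul continuous_id)).continuousOn
    · intro t ht
      rw [interior_Ici] at ht
      exact (hG t (le_of_lt ht)).differentiableAt.differentiableWithinAt
    · intro t ht
      rw [interior_Ici] at ht
      have ht' := le_of_lt (Set.mem_Ioi.mp ht)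
      rw [(hG t ht').deriv]
      have hE : 0 < Real.exp (c * t) := Real.exp_pos _
      have h1 : δ * (1 - a t ^ 2) * a t ≤ (lam1 - R t) * a t :=
        mul_le_mul_of_nonneg_right (hgap t ht') (by linarith [hapos t ht'])
      have h2 : c * (1 - a t) ≤ δ * (1 - a t ^ 2) * a t := by
        have p1 : 0 ≤ δ * (1 - a t) * (a t - a 0) :=
          mul_nonneg (mul_nonneg hδ.le (by linarith [hale t ht'])) (by linarith [hapos t ht'])
        have p2 : 0 ≤ δ * (1 - a t) * (a t * a t) :=
          mul_nonneg (mul_nonneg hδ.le (by linarith [hale t ht'])) (mul_self_nonneg _)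
        rw [hcdef]
        nlinarith
      nlinarith
  have hdecay : ∀ t : ℝ, 0 ≤ t → 1 - a t ≤ (1 - a 0) * Real.exp (-(c * t)) := by
    intro t ht
    have h := hganti Set.self_mem_Ici ht ht
    rw [hgdef] at h
    simp only [mul_zero, Real.exp_zero, mul_one] at h
    have hE : 0 < Real.exp (c * t) := Real.exp_pos _
    rw [Real.exp_neg, ← div_eq_mul_inv, le_div_iff₀ hE]
    exact h
  -- 1 - a t → 0
  have hbound_tendsto : Tendsto (fun t => (1 - a 0) * Real.exp (-(c * t))) atTop (nhds 0) := by
    have hexp0 : Tendsto (fun t => Real.exp (-(c * t))) atTop (nhds 0) :=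
      Real.tendsto_exp_atBot.comp (tendsto_neg_atTop_atBot.comp
        (Tendsto.const_mul_atTop hc tendsto_id))
    simpa using hexp0.const_mul (1 - a 0)
  have h1a : Tendsto (fun t => 1 - a t) atTop (nhds 0) := by
    apply squeeze_zero'
    · exact (eventually_ge_atTop 0).mono fun t ht => by linarith [hale t ht]
    · exact (eventually_ge_atTop 0).mono fun t ht => hdecay t ht
    · exact hbound_tendsto
  have haT : Tendsto a atTop (nhds 1) := by
    have h := Tendsto.sub (tendsto_const_nhds : Tendsto (fun _ : ℝ => (1:ℝ)) atTop (nhds 1)) h1a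
    simp only [sub_zero] at h
    have heq : (fun t => 1 - (1 - a t)) = a := by funext t; ring
    rwa [heq] at h
  have hnormsub : ∀ t : ℝ, 0 ≤ t → ‖v t - q‖ ^ 2 = 2 - 2 * a t := by
    intro t ht
    rw [norm_sub_sq_real, hnorm t ht, hq, real_inner_comm]
    simp only [hadef]
    ring
  have hD2 : Tendsto (fun t => ‖v t - q‖ ^ 2) atTop (nhds 0) := by
    have h2a : Tendsto (fun t => 2 - 2 * a t) atTop (nhds 0) := by
      have h := Tendsto.sub (tendsto_const_nhds : Tendsto (fun _ : ℝ => (2:ℝ)) atTop (nhds 2)) (haT.const_mul 2)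
      norm_num at h
      exact h
    apply h2a.congr'
    exact (eventually_ge_atTop 0).mono fun t ht => (hnormsub t ht).symm
  have hD : Tendsto (fun t => ‖v t - q‖) atTop (nhds 0) := by
    have h := (Real.continuous_sqrt.tendsto 0).comp hD2
    rw [Real.sqrt_zero] at h
    convert h using 2 with t
    exact (Real.sqrt_sq (norm_nonneg _)).symm
  rw [tendsto_iff_dist_tendsto_zero]
  simpa only [dist_eq_norm] using hD
end

section
/- Let v₁,…,v_N ∈ ℝ^d be unit vectors with N ≥ 2 and v₂ = ⋯ = v_N = w, and let C = ∑_{k=1}^N (v_k − v̄)(v_k − v̄)ᵀ with v̄ = (1/N)∑ v_k. Define the Lyapunov function V = (1/2)∑_{i=1}^{N−1} ‖vᵢ − v_N‖², and let each state move with velocity v̇ᵢ = (I − vᵢvᵢᵀ)C vᵢ. Then the derivative of V along these velocities, namely ∑_{i=1}^{N−1} ⟨vᵢ − v_N, v̇ᵢ − v̇_N⟩, equals ((2N−2)/N)·(1 − ⟨v₁, w⟩)²·(1 + ⟨v₁, w⟩); in particular it is strictly positive whenever v₁ ≠ ±w. -/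
open Matrix Filter Finset
open scoped InnerProductSpace

lemma vmv_mulVec {d : ℕ} (a b x : Fin d → ℝ) :
    Matrix.vecMulVec a b *ᵥ x = (b ⬝ᵥ x) • a := by
  ext i
  simp [Matrix.mulVec, Matrix.vecMulVec_apply, dotProduct, Finset.mul_sum, mul_assoc,
    mul_comm, mul_left_comm]

lemma oja_dot {d : ℕ} (c : ℝ) (p q x : Fin d → ℝ) :
    q ⬝ᵥ (ojaRHS (c • Matrix.vecMulVec p p) (WithLp.toLp 2 x) : Fin d → ℝ)
      = c * (p ⬝ᵥ x) * (q ⬝ᵥ p) - c * (p ⬝ᵥ x) * (x ⬝ᵥ p) * (q ⬝ᵥ x) := by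
  show q ⬝ᵥ (((1 - Matrix.vecMulVec x x) * (c • Matrix.vecMulVec p p)) *ᵥ x) = _
  rw [sub_mul, one_mul, Matrix.sub_mulVec, ← Matrix.mulVec_mulVec,
    Matrix.smul_mulVec, vmv_mulVec]
  simp [dotProduct_sub, dotProduct_smul, vmv_mulVec, smul_smul, mul_comm, mul_assoc,
    mul_left_comm, dotProduct_comm x p]

lemma oja_key {d : ℕ} (c : ℝ) (u w : Fin d → ℝ) (huu : u ⬝ᵥ u = 1) (hww : w ⬝ᵥ w = 1) :
    (u - w) ⬝ᵥ ((ojaRHS (c • Matrix.vecMulVec (u - w) (u - w)) (WithLp.toLp 2 u) : Fin d → ℝ)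
        - (ojaRHS (c • Matrix.vecMulVec (u - w) (u - w)) (WithLp.toLp 2 w) : Fin d → ℝ))
      = 2 * c * (1 - u ⬝ᵥ w) ^ 2 * (1 + u ⬝ᵥ w) := by
  rw [dotProduct_sub, oja_dot, oja_dot]
  simp only [sub_dotProduct, dotProduct_sub, dotProduct_comm w u, huu, hww]
  ring

lemma dot_inner {d : ℕ} (x y : EuclideanSpace ℝ (Fin d)) : x ⬝ᵥ y = ⟪x, y⟫_ℝ := by
  rw [PiLp.inner_apply]; simp [dotProduct, RCLike.inner_apply, mul_comm]

/-- For unit vectors `v₁, …, v_N` with `v₂ = ⋯ = v_N = w`, the derivative of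
the Lyapunov function `V = (1/2)∑_{i<N} ‖vᵢ - v_N‖²` along the PCA velocities
`v̇ᵢ = (I - vᵢvᵢᵀ) C vᵢ` equals `((2N-2)/N)(1 - ⟨v₁, w⟩)²(1 + ⟨v₁, w⟩)`, which
is strictly positive whenever `v₁ ≠ ±w`. -/
theorem stmt8 {d N : ℕ} (hN : 2 ≤ N) (v : Fin N → EuclideanSpace ℝ (Fin d))
    (hunit : ∀ k : Fin N, ‖v k‖ = 1) (w : EuclideanSpace ℝ (Fin d))
    (hw : ∀ k : Fin N, k ≠ ⟨0, by omega⟩ → v k = w)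
    (vbar : EuclideanSpace ℝ (Fin d)) (hvbar : vbar = (N : ℝ)⁻¹ • ∑ k, v k)
    (C : Matrix (Fin d) (Fin d) ℝ)
    (hC : C = ∑ k, Matrix.vecMulVec (v k - vbar) (v k - vbar))
    (vel : Fin N → EuclideanSpace ℝ (Fin d))
    (hvel : ∀ k : Fin N, vel k = ojaRHS C (v k)) :
    (∑ k ∈ Finset.univ.erase (⟨N - 1, by omega⟩ : Fin N),
        ⟪v k - v ⟨N - 1, by omega⟩, vel k - vel ⟨N - 1, by omega⟩⟫_ℝ)
      = ((2 * (N : ℝ) - 2) / N) * (1 - ⟪v ⟨0, by omega⟩, w⟫_ℝ) ^ 2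
          * (1 + ⟪v ⟨0, by omega⟩, w⟫_ℝ) ∧
    (v ⟨0, by omega⟩ ≠ w ∧ v ⟨0, by omega⟩ ≠ -w →
      0 < ((2 * (N : ℝ) - 2) / N) * (1 - ⟪v ⟨0, by omega⟩, w⟫_ℝ) ^ 2
            * (1 + ⟪v ⟨0, by omega⟩, w⟫_ℝ)) := by
  have hNR : (2 : ℝ) ≤ (N : ℝ) := by exact_mod_cast hN
  have hn0 : (N : ℝ) ≠ 0 := by linarith
  set i0 : Fin N := ⟨0, by omega⟩ with hi0def
  set iL : Fin N := ⟨N - 1, by omega⟩ with hiLdef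
  have hne : i0 ≠ iL := by
    simp only [hi0def, hiLdef, ne_eq, Fin.mk.injEq]
    omega
  have hwL : v iL = w := hw iL (Ne.symm hne)
  set u : EuclideanSpace ℝ (Fin d) := v i0 with hudef
  set s : ℝ := ⟪u, w⟫_ℝ with hsdef
  have hwnorm : ‖w‖ = 1 := by rw [← hwL]; exact hunit iL
  have huu : (u : Fin d → ℝ) ⬝ᵥ u = 1 := by
    rw [dot_inner, real_inner_self_eq_norm_sq, hunit i0]; norm_num
  have hww : (w : Fin d → ℝ) ⬝ᵥ w = 1 := by
    rw [dot_inner, real_inner_self_eq_norm_sq, hwnorm]; norm_num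
  have huw : (u : Fin d → ℝ) ⬝ᵥ w = s := dot_inner u w
  -- the mean, componentwise
  have hsum : ∀ j, vbar j = (N : ℝ)⁻¹ * (u j + ((N : ℝ) - 1) * w j) := by
    intro j
    rw [hvbar, PiLp.smul_apply, smul_eq_mul]
    congr 1
    have h1 : (∑ k : Fin N, v k) j = ∑ k : Fin N, v k j := by
      simp [WithLp.ofLp_sum]
    rw [h1, ← Finset.add_sum_erase _ _ (Finset.mem_univ i0)]
    congr 1
    rw [Finset.sum_congr rfl (fun k hk => by
        rw [hw k (Finset.ne_of_mem_erase hk)]),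
      Finset.sum_const, Finset.card_erase_of_mem (Finset.mem_univ i0),
      Finset.card_univ, Fintype.card_fin]
    rw [nsmul_eq_mul, Nat.cast_sub (by omega : 1 ≤ N)]
    norm_num
  -- the covariance matrix
  have hC' : C = (((N : ℝ) - 1) / N) • Matrix.vecMulVec ((u - w : EuclideanSpace ℝ (Fin d)) : Fin d → ℝ) (u - w) := by
    rw [hC]
    ext i j
    rw [Matrix.sum_apply, ← Finset.add_sum_erase _ _ (Finset.mem_univ i0),
      Finset.sum_congr rfl (fun k hk => by
        rw [hw k (Finset.ne_of_mem_erase hk)]),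
      Finset.sum_const, Finset.card_erase_of_mem (Finset.mem_univ i0),
      Finset.card_univ, Fintype.card_fin]
    simp only [Matrix.vecMulVec_apply, Matrix.smul_apply, PiLp.sub_apply, smul_eq_mul,
      nsmul_eq_mul, Nat.cast_sub (by omega : 1 ≤ N), Nat.cast_one]
    rw [hsum i, hsum j]
    field_simp
    ring
  have hmem : i0 ∈ Finset.univ.erase iL := Finset.mem_erase.2 ⟨hne, Finset.mem_univ _⟩
  constructor
  · rw [Finset.sum_eq_single_of_mem i0 hmem (fun k _ hki0 => by
      rw [hw k hki0, hwL, sub_self, inner_zero_left])]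
    rw [hwL, hvel i0, hvel iL, hwL, hC', ← dot_inner]
    have := oja_key (((N : ℝ) - 1) / N) (u : Fin d → ℝ) (w : Fin d → ℝ) huu hww
    rw [huw] at this
    simp only [WithLp.toLp_ofLp, ← WithLp.ofLp_sub] at this
    rw [this]
    have h2 : 2 * (((N : ℝ) - 1) / N) = (2 * (N : ℝ) - 2) / N := by
      field_simp
    rw [h2]
  · rintro ⟨h1, h2⟩
    have hs1 : s < 1 := by
      have h : 0 < ‖u - w‖ ^ 2 := by
        exact pow_pos (norm_pos_iff.2 (sub_ne_zero.2 h1)) 2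
      rw [norm_sub_sq_real, hunit i0, hwnorm] at h
      simp only [← hsdef] at h
      nlinarith
    have hs2 : -1 < s := by
      have h : 0 < ‖u + w‖ ^ 2 := by
        exact pow_pos (norm_pos_iff.2 fun hc => h2 (eq_neg_of_add_eq_zero_left hc)) 2
      rw [norm_add_sq_real, hunit i0, hwnorm] at h
      simp only [← hsdef] at h
      nlinarith
    have hc : 0 < (2 * (N : ℝ) - 2) / N := by
      apply div_pos <;> linarith
    have hsq : 0 < (1 - s) ^ 2 := pow_pos (by linarith) 2
    exact mul_pos (mul_pos hc hsq) (by linarith)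
end

section
/- Let N ≥ 2 and let v₁, w : [0,∞) → ℝ^d be differentiable with ‖v₁(t)‖ = ‖w(t)‖ = 1 for all t. Consider the N-agent configuration with agent 1 at v₁ and agents 2,…,N all at w, with covariance C(t) = ((N−1)/N)(v₁(t) − w(t))(v₁(t) − w(t))ᵀ, and suppose v̇₁ = (I − v₁v₁ᵀ)Cv₁ and ẇ = (I − wwᵀ)Cw. Then β(t) = 1 − ⟨v₁(t), w(t)⟩ satisfies β̇ = ((2N−2)/N)·β²·(2 − β); consequently, if 0 < β(0) < 2 then β(t) is strictly increasing and β(t) → 2, i.e. ⟨v₁(t), w(t)⟩ → −1 as t → ∞, so the trajectory is driven away from the consensus configuration v₁ = w. In particular, the consensus equilibrium of the PCA opinion dynamics is unstable. -/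
open Matrix Filter
open scoped InnerProductSpace

lemma vmv {d : ℕ} (a b x : Fin d → ℝ) : (vecMulVec a b) *ᵥ x = (b ⬝ᵥ x) • a := by
  funext i
  simp only [vecMulVec_apply, mulVec, dotProduct, Pi.smul_apply, smul_eq_mul,
    Finset.sum_mul, Finset.mul_sum]
  exact Finset.sum_congr rfl fun j _ => by ring

lemma inner_dot {d : ℕ} (a b : EuclideanSpace ℝ (Fin d)) : ⟪a,b⟫_ℝ = (a : Fin d → ℝ) ⬝ᵥ b := by
  simp [PiLp.inner_apply, dotProduct, RCLike.inner_apply, mul_comm]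

lemma oja_eq {d : ℕ} (c : ℝ) (u x : EuclideanSpace ℝ (Fin d)) :
    (ojaRHS (c • vecMulVec u u) x : Fin d → ℝ)
      = (c * ((u : Fin d → ℝ) ⬝ᵥ x)) • ((u : Fin d → ℝ) - ((x : Fin d → ℝ) ⬝ᵥ u) • x) := by
  show ((1 - Matrix.vecMulVec (x : Fin d → ℝ) x) * (c • vecMulVec (u : Fin d → ℝ) u)) *ᵥ (x : Fin d → ℝ) = _
  rw [← Matrix.mulVec_mulVec, Matrix.smul_mulVec, vmv, smul_smul, Matrix.mulVec_smul,
    Matrix.sub_mulVec, Matrix.one_mulVec, vmv, mul_comm c]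

lemma keyfun {d : ℕ} (c : ℝ) (X Y : Fin d → ℝ) (hxx : X ⬝ᵥ X = 1) (hyy : Y ⬝ᵥ Y = 1) :
    ((c * ((X - Y) ⬝ᵥ X)) • (X - Y - (X ⬝ᵥ (X - Y)) • X)) ⬝ᵥ Y
      + X ⬝ᵥ ((c * ((X - Y) ⬝ᵥ Y)) • (X - Y - (Y ⬝ᵥ (X - Y)) • Y))
      = -(2 * c * (1 - X ⬝ᵥ Y) ^ 2 * (1 + X ⬝ᵥ Y)) := by
  have hxy : Y ⬝ᵥ X = X ⬝ᵥ Y := dotProduct_comm _ _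
  simp only [smul_dotProduct, dotProduct_smul, sub_dotProduct,
    dotProduct_sub, smul_eq_mul, hxx, hyy, hxy]
  ring

lemma key {d : ℕ} (c : ℝ) (x y : EuclideanSpace ℝ (Fin d)) (hx : ‖x‖ = 1) (hy : ‖y‖ = 1) :
    ⟪ojaRHS (c • vecMulVec (x - y) (x - y)) x, y⟫_ℝ
      + ⟪x, ojaRHS (c • vecMulVec (x - y) (x - y)) y⟫_ℝ
      = -(2 * c * (1 - ⟪x, y⟫_ℝ) ^ 2 * (1 + ⟪x, y⟫_ℝ)) := by
  have hxx : (x : Fin d → ℝ) ⬝ᵥ (x : Fin d → ℝ) = 1 := by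
    rw [← inner_dot, real_inner_self_eq_norm_sq, hx]; norm_num
  have hyy : (y : Fin d → ℝ) ⬝ᵥ (y : Fin d → ℝ) = 1 := by
    rw [← inner_dot, real_inner_self_eq_norm_sq, hy]; norm_num
  rw [inner_dot, inner_dot, inner_dot, oja_eq, oja_eq]
  exact keyfun c x y hxx hyy

/-- For the `N`-agent configuration with agent 1 at `v₁` and agents `2, …, N`
at `w`, evolving under the PCA dynamics with covariance
`C = ((N-1)/N)(v₁-w)(v₁-w)ᵀ`, the quantity `β = 1 - ⟨v₁, w⟩` satisfies
`β̇ = ((2N-2)/N) β² (2 - β)`; hence if `0 < β(0) < 2`, then `β` is strictly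
increasing on `[0, ∞)` and `β → 2`, i.e. `⟨v₁, w⟩ → -1`: the trajectory is
driven away from consensus, so the consensus equilibrium is unstable. -/
theorem stmt9 {d N : ℕ} (hN : 2 ≤ N)
    (v1 w : ℝ → EuclideanSpace ℝ (Fin d))
    (hn1 : ∀ t : ℝ, 0 ≤ t → ‖v1 t‖ = 1) (hnw : ∀ t : ℝ, 0 ≤ t → ‖w t‖ = 1)
    (C : ℝ → Matrix (Fin d) (Fin d) ℝ)
    (hC : ∀ t : ℝ, C t = (((N : ℝ) - 1) / N) • Matrix.vecMulVec (v1 t - w t) (v1 t - w t))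
    (hode1 : ∀ t : ℝ, 0 ≤ t → HasDerivAt v1 (ojaRHS (C t) (v1 t)) t)
    (hode2 : ∀ t : ℝ, 0 ≤ t → HasDerivAt w (ojaRHS (C t) (w t)) t)
    (β : ℝ → ℝ) (hβ : ∀ t : ℝ, β t = 1 - ⟪v1 t, w t⟫_ℝ) :
    (∀ t : ℝ, 0 ≤ t →
      HasDerivAt β ((2 * (N : ℝ) - 2) / N * (β t) ^ 2 * (2 - β t)) t) ∧
    (0 < β 0 → β 0 < 2 →
      StrictMonoOn β (Set.Ici 0) ∧ Tendsto β atTop (nhds 2) ∧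
        Tendsto (fun t => ⟪v1 t, w t⟫_ℝ) atTop (nhds (-1))) := by
  have hN0 : (N : ℝ) ≠ 0 := Nat.cast_ne_zero.mpr (by omega)
  have hN2 : (2 : ℝ) ≤ (N : ℝ) := by exact_mod_cast hN
  set K : ℝ := (2 * (N : ℝ) - 2) / N with hK
  have hKpos : 0 < K := by
    apply div_pos <;> linarith
  have hβfun : β = fun t => 1 - ⟪v1 t, w t⟫_ℝ := funext hβ
  -- the derivative formula
  have hd : ∀ t : ℝ, 0 ≤ t → HasDerivAt β (K * (β t) ^ 2 * (2 - β t)) t := by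
    intro t ht
    have h1 := HasDerivAt.inner ℝ (hode1 t ht) (hode2 t ht)
    have h2 := h1.const_sub 1
    rw [← hβfun] at h2
    have hkey := key (((N : ℝ) - 1) / N) (v1 t) (w t) (hn1 t ht) (hnw t ht)
    rw [← hC t] at hkey
    have heq : K * (β t) ^ 2 * (2 - β t)
        = -(⟪v1 t, ojaRHS (C t) (w t)⟫_ℝ + ⟪ojaRHS (C t) (v1 t), w t⟫_ℝ) := by
      rw [add_comm, hkey, hβ t, hK]
      field_simp
      ring
    rw [heq]
    exact h2
  refine ⟨hd, fun hb0 hb2 => ?_⟩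
  -- a priori bounds 0 ≤ β ≤ 2
  have hbound : ∀ t : ℝ, 0 ≤ t → 0 ≤ β t ∧ β t ≤ 2 := by
    intro t ht
    have h := abs_real_inner_le_norm (v1 t) (w t)
    rw [hn1 t ht, hnw t ht] at h
    rw [hβ t]
    rw [abs_le] at h
    constructor <;> [linarith [h.2]; linarith [h.1]]
  have hcont : ContinuousOn β (Set.Ici 0) :=
    fun t ht => (hd t ht).continuousAt.continuousWithinAt
  have hderiv : ∀ t : ℝ, 0 ≤ t → deriv β t = K * (β t) ^ 2 * (2 - β t) :=
    fun t ht => (hd t ht).deriv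
  -- monotone (nonstrict) on Ici 0
  have hmono : MonotoneOn β (Set.Ici 0) := by
    apply monotoneOn_of_deriv_nonneg (convex_Ici 0) hcont
    · intro t ht
      rw [interior_Ici] at ht
      exact (hd t (le_of_lt ht)).differentiableAt.differentiableWithinAt
    · intro t ht
      rw [interior_Ici] at ht
      have ht' := le_of_lt (Set.mem_Ioi.mp ht)
      rw [hderiv t ht']
      have hb := hbound t ht'
      exact mul_nonneg (mul_nonneg hKpos.le (sq_nonneg _)) (by linarith [hb.2])
  have hge : ∀ t : ℝ, 0 ≤ t → β 0 ≤ β t :=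
    fun t ht => hmono Set.self_mem_Ici ht ht
  -- β t < 2 for all t ≥ 0, via Gronwall-style function
  have hlt2 : ∀ t : ℝ, 0 ≤ t → β t < 2 := by
    intro t ht
    set f : ℝ → ℝ := fun t => (2 - β t) * Real.exp (4 * K * t) with hf
    have hfd : ∀ u : ℝ, 0 ≤ u → HasDerivAt f
        (-(K * (β u) ^ 2 * (2 - β u)) * Real.exp (4 * K * u)
          + (2 - β u) * (Real.exp (4 * K * u) * (4 * K))) u := by
      intro u hu
      have he : HasDerivAt (fun s : ℝ => Real.exp (4 * K * s))
          (Real.exp (4 * K * u) * (4 * K)) u := by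
        simpa using (((hasDerivAt_id u).const_mul (4 * K)).exp)
      exact ((hd u hu).const_sub 2).mul he
    have hfmono : MonotoneOn f (Set.Ici 0) := by
      apply monotoneOn_of_deriv_nonneg (convex_Ici 0)
        (fun u hu => (hfd u hu).continuousAt.continuousWithinAt)
      · intro u hu
        rw [interior_Ici] at hu
        exact (hfd u (le_of_lt hu)).differentiableAt.differentiableWithinAt
      · intro u hu
        rw [interior_Ici] at hu
        have hu' := le_of_lt (Set.mem_Ioi.mp hu)
        rw [(hfd u hu').deriv]
        have hb := hbound u hu'
        have hexp := Real.exp_pos (4 * K * u)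
        have h4 : 0 ≤ 4 - (β u) ^ 2 := by nlinarith [hb.1, hb.2]
        have heq : -(K * (β u) ^ 2 * (2 - β u)) * Real.exp (4 * K * u)
            + (2 - β u) * (Real.exp (4 * K * u) * (4 * K))
            = Real.exp (4 * K * u) * K * ((2 - β u) * (4 - (β u) ^ 2)) := by ring
        rw [heq]
        exact mul_nonneg (mul_nonneg hexp.le hKpos.le)
          (mul_nonneg (by linarith [hb.2]) h4)
    have hf0 : 0 < f 0 := by
      simp only [hf, mul_zero, Real.exp_zero, mul_one]
      linarith
    have hmf := hfmono Set.self_mem_Ici ht ht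
    simp only [hf] at hmf hf0
    have hexp := Real.exp_pos (4 * K * t)
    by_contra hcon
    push_neg at hcon
    have hft : (2 - β t) * Real.exp (4 * K * t) ≤ 0 :=
      mul_nonpos_iff.mpr (Or.inr ⟨by linarith, hexp.le⟩)
    linarith
  have hpos : ∀ t : ℝ, 0 ≤ t → 0 < β t := fun t ht => lt_of_lt_of_le hb0 (hge t ht)
  -- strict monotonicity
  have hstrict : StrictMonoOn β (Set.Ici 0) := by
    apply strictMonoOn_of_deriv_pos (convex_Ici 0) hcont
    intro t ht
    rw [interior_Ici] at ht
    have ht' := le_of_lt (Set.mem_Ioi.mp ht)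
    rw [hderiv t ht']
    have h1 := hpos t ht'
    have h2 := hlt2 t ht'
    exact mul_pos (mul_pos hKpos (pow_pos h1 2)) (by linarith)
  -- convergence to 2
  have htend : Tendsto β atTop (nhds 2) := by
    set g : ℝ → ℝ := fun t => β (max t 0) with hg
    have hgm : Monotone g := fun a b hab =>
      hmono (Set.mem_Ici.mpr (le_max_right a 0)) (Set.mem_Ici.mpr (le_max_right b 0))
        (max_le_max hab le_rfl)
    have hgb : BddAbove (Set.range g) := by
      refine ⟨2, ?_⟩
      rintro x ⟨t, rfl⟩
      exact le_of_lt (hlt2 _ (le_max_right t 0))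
    have hgt := tendsto_atTop_ciSup hgm hgb
    set L : ℝ := ⨆ t, g t with hL
    have hgle : ∀ t : ℝ, g t ≤ L := fun t => le_ciSup hgb t
    have hL2 : L ≤ 2 := ciSup_le fun t => le_of_lt (hlt2 _ (le_max_right t 0))
    have hLeq : L = 2 := by
      by_contra hne
      have hLlt : L < 2 := lt_of_le_of_ne hL2 hne
      set m : ℝ := K * (β 0) ^ 2 * (2 - L) with hm
      have h2L : 0 < 2 - L := by linarith
      have hmpos : 0 < m := mul_pos (mul_pos hKpos (pow_pos hb0 2)) h2L
      -- β t ≤ L for t ≥ 0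
      have hβle : ∀ t : ℝ, 0 ≤ t → β t ≤ L := by
        intro t ht
        have h := hgle t
        simp only [hg] at h
        rwa [sup_eq_left.mpr ht] at h
      -- h t = β t - m t is monotone on Ici 0
      have hh : MonotoneOn (fun t => β t - m * t) (Set.Ici 0) := by
        apply monotoneOn_of_deriv_nonneg (convex_Ici 0)
          (hcont.sub (continuous_const.mul continuous_id).continuousOn)
        · intro t ht
          rw [interior_Ici] at ht
          exact (((hd t (le_of_lt ht)).sub
            ((hasDerivAt_id t).const_mul m)).differentiableAt).differentiableWithinAt
        · intro t ht
          rw [interior_Ici] at ht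
          have ht' := le_of_lt (Set.mem_Ioi.mp ht)
          have hda := (hd t ht').sub ((hasDerivAt_id t).const_mul m)
          change 0 ≤ deriv (β - fun y => m * id y) t; rw [hda.deriv]
          have h1 := hge t ht'
          have h2 := hβle t ht'
          have h3 := hbound t ht'
          simp only [mul_one]
          rw [hm]
          have e1 : (β 0) ^ 2 ≤ (β t) ^ 2 := by nlinarith [hb0, h1]
          have e2 : 2 - L ≤ 2 - β t := by linarith
          have e3 : K * (β 0) ^ 2 ≤ K * (β t) ^ 2 :=
            mul_le_mul_of_nonneg_left e1 hKpos.le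
          have := mul_le_mul e3 e2 (by linarith) (by positivity)
          linarith
      have hbig := hh (Set.self_mem_Ici) (Set.mem_Ici.mpr (le_of_lt (div_pos two_pos hmpos)))
        (le_of_lt (div_pos two_pos hmpos))
      simp only [mul_zero, sub_zero] at hbig
      rw [mul_div_cancel₀ 2 (ne_of_gt hmpos)] at hbig
      have := hβle (2 / m) (le_of_lt (div_pos two_pos hmpos))
      linarith
    rw [← hLeq]
    apply hgt.congr'
    filter_upwards [eventually_ge_atTop (0 : ℝ)] with t ht
    show β (t ⊔ 0) = β t
    rw [sup_eq_left.mpr ht]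
  refine ⟨hstrict, htend, ?_⟩
  have : (fun t => ⟪v1 t, w t⟫_ℝ) = fun t => 1 - β t := by
    funext t
    rw [hβ t]; ring
  rw [this]
  have h2 : Tendsto (fun t => 1 - β t) atTop (nhds (1 - 2)) :=
    tendsto_const_nhds.sub htend
  norm_num at h2
  exact h2
end
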